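/- (Erdős–Rényi connectivity.) Let $G(n, p)$ be the Erdős–Rényi random graph on $n$ vertices where each edge appears independently with probability $p = c \log n / n$ for a fixed constant $c > 1$. Then the probability that $G(n,p)$ is connected tends to $1$ as $n \to \infty$. -/

import Mathlib

open MeasureTheory Filter

/-- The Erdős–Rényi measure on edge-indicator functions: each potential edge (an
element of `Sym2 (Fin n)`) is present independently with probability `p`
(clamped to `[0,1]`). -/
noncomputable def erMeasure (n : ℕ) (p : ℝ) : Measure (Sym2 (Fin n) → Bool) :=
  Measure.pi fun _ =>
    (PMF.bernoulli (min (Real.toNNReal p) 1) (min_le_right _ _)).toMeasure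

/-- The simple graph determined by an edge-indicator function. -/
def graphOf {n : ℕ} (ω : Sym2 (Fin n) → Bool) : SimpleGraph (Fin n) :=
  SimpleGraph.fromRel fun u v => ω s(u, v) = true

section erdosRenyiAux

open Finset

instance erMeasure.instIsProbabilityMeasure (n : ℕ) (p : ℝ) :
    IsProbabilityMeasure (erMeasure n p) := by
  unfold erMeasure; infer_instance

lemma er_cut_measure (n : ℕ) (p : ℝ) (hp : 0 ≤ p) (S : Finset (Fin n)) :
    erMeasure n p {ω | ∀ u ∈ S, ∀ v ∈ Sᶜ, ω s(u,v) = false}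
      ≤ ENNReal.ofReal (Real.exp (-p)) ^ (S.card * (n - S.card)) := by
  classical
  set q : NNReal := min (Real.toNNReal p) 1 with hq
  set B : Measure Bool := (PMF.bernoulli q (min_le_right _ _)).toMeasure with hB
  set A : Finset (Sym2 (Fin n)) := (S ×ˢ Sᶜ).image (fun a => s(a.1, a.2)) with hA
  have hinj : Set.InjOn (fun a : Fin n × Fin n => s(a.1, a.2)) ↑(S ×ˢ Sᶜ) := by
    rintro ⟨u, v⟩ hu ⟨u', v'⟩ hv h
    simp only [Finset.coe_product, Set.mem_prod, Finset.mem_coe, Finset.mem_compl] at hu hv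
    simp only [Sym2.eq, Sym2.rel_iff', Prod.mk.injEq, Prod.swap_prod_mk] at h
    rcases h with ⟨h1, h2⟩ | ⟨h1, h2⟩
    · simp [h1, h2]
    · exact absurd (h1 ▸ hu.1) hv.2
  have hcard : A.card = S.card * (n - S.card) := by
    rw [hA, Finset.card_image_of_injOn hinj, Finset.card_product, Finset.card_compl,
      Fintype.card_fin]
  have hevent : {ω : Sym2 (Fin n) → Bool | ∀ u ∈ S, ∀ v ∈ Sᶜ, ω s(u,v) = false}
      = Set.univ.pi (fun e => if e ∈ A then ({false} : Set Bool) else Set.univ) := by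
    ext ω
    simp only [Set.mem_setOf_eq, Set.mem_pi, Set.mem_univ, forall_true_left]
    constructor
    · intro h e
      by_cases he : e ∈ A
      · simp only [he, if_true, Set.mem_singleton_iff]
        rw [hA] at he
        simp only [Finset.mem_image, Finset.mem_product] at he
        obtain ⟨⟨u, v⟩, ⟨hu, hv⟩, rfl⟩ := he
        exact h u hu v hv
      · simp [he]
    · intro h u hu v hv
      have he : s(u, v) ∈ A := by
        rw [hA]; exact Finset.mem_image.2 ⟨(u, v), Finset.mem_product.2 ⟨hu, hv⟩, rfl⟩
      have := h s(u, v)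
      simpa [he] using this
  have hfalse : B {false} = 1 - q := by
    rw [hB, PMF.toMeasure_apply_singleton _ _ (measurableSet_singleton _)]
    simp [PMF.bernoulli]
  have hle : B {false} ≤ ENNReal.ofReal (Real.exp (-p)) := by
    rw [hfalse]
    rcases min_cases (Real.toNNReal p) 1 with ⟨h1, h2⟩ | ⟨h1, h2⟩
    · rw [hq, h1]; change 1 - ENNReal.ofReal p ≤ _
      rw [← ENNReal.ofReal_one, ← ENNReal.ofReal_sub _ hp]
      exact ENNReal.ofReal_le_ofReal (by linarith [Real.add_one_le_exp (-p)])
    · rw [hq, h1]; simp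
  calc erMeasure n p {ω | ∀ u ∈ S, ∀ v ∈ Sᶜ, ω s(u,v) = false}
      = ∏ e : Sym2 (Fin n), B (if e ∈ A then ({false} : Set Bool) else Set.univ) := by
        rw [hevent, erMeasure, Measure.pi_pi]
    _ = ∏ e : Sym2 (Fin n), (if e ∈ A then B {false} else 1) := by
        refine Finset.prod_congr rfl fun e _ => ?_
        split
        · rfl
        · exact measure_univ
    _ = B {false} ^ A.card := by
        rw [Finset.prod_ite_mem, Finset.univ_inter, Finset.prod_const]
    _ ≤ ENNReal.ofReal (Real.exp (-p)) ^ (S.card * (n - S.card)) := by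
        rw [hcard]; exact pow_le_pow_left' hle _

lemma er_exists_cut {n : ℕ} (hn : 0 < n) (ω : Sym2 (Fin n) → Bool)
    (h : ¬ (graphOf ω).Connected) :
    ∃ S : Finset (Fin n), S.Nonempty ∧ 2 * S.card ≤ n ∧
      ∀ u ∈ S, ∀ v ∈ Sᶜ, ω s(u,v) = false := by
  classical
  haveI : Nonempty (Fin n) := ⟨⟨0, hn⟩⟩
  rw [SimpleGraph.connected_iff] at h
  push_neg at h
  have hpre : ¬ (graphOf ω).Preconnected := fun hp => @IsEmpty.false _ (h hp) ⟨0, hn⟩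
  unfold SimpleGraph.Preconnected at hpre
  push_neg at hpre
  obtain ⟨v, w, hvw⟩ := hpre
  set S₀ : Finset (Fin n) := univ.filter (fun u => (graphOf ω).Reachable v u) with hS₀
  have hv : v ∈ S₀ := by simp [hS₀]
  have hw : w ∉ S₀ := by simp [hS₀, hvw]
  have hcross : ∀ u ∈ S₀, ∀ x ∈ S₀ᶜ, ω s(u,x) = false := by
    intro u hu x hx
    simp only [hS₀, mem_filter, mem_univ, true_and, mem_compl] at hu hx
    by_contra hne
    have hadj : (graphOf ω).Adj u x := by
      rw [graphOf, SimpleGraph.fromRel_adj]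
      refine ⟨?_, Or.inl (by simpa using hne)⟩
      rintro rfl
      exact hx hu
    exact hx (hu.trans hadj.reachable)
  have hcard0 : S₀ᶜ.card = n - S₀.card := by
    rw [card_compl, Fintype.card_fin]
  by_cases hhalf : 2 * S₀.card ≤ n
  · exact ⟨S₀, ⟨v, hv⟩, hhalf, hcross⟩
  · refine ⟨S₀ᶜ, ⟨w, mem_compl.2 hw⟩, ?_, ?_⟩
    · have := card_le_univ S₀
      rw [Fintype.card_fin] at this
      omega
    · intro u hu x hx
      rw [compl_compl] at hx
      rw [Sym2.eq_swap]
      exact hcross x hx u hu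

noncomputable def erRealBound (p : ℝ) (n : ℕ) : ℝ :=
  ∑ k ∈ Icc 1 (n/2), (n.choose k : ℝ) * Real.exp (-(p * (k * (n - k) : ℕ)))

lemma er_bad_bound (n : ℕ) (p : ℝ) (hn : 0 < n) (hp : 0 ≤ p) :
    erMeasure n p {ω | ¬ (graphOf ω).Connected} ≤ ENNReal.ofReal (erRealBound p n) := by
  classical
  have hsub : {ω : Sym2 (Fin n) → Bool | ¬ (graphOf ω).Connected} ⊆
      ⋃ k ∈ Icc 1 (n/2), ⋃ S ∈ powersetCard k (univ : Finset (Fin n)),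
        {ω : Sym2 (Fin n) → Bool | ∀ u ∈ S, ∀ v ∈ Sᶜ, ω s(u,v) = false} := by
    intro ω hω
    obtain ⟨S, hne, hhalf, hcut⟩ := er_exists_cut hn ω hω
    simp only [Set.mem_iUnion, Set.mem_setOf_eq]
    exact ⟨S.card, mem_Icc.2 ⟨hne.card_pos,
      Nat.le_div_iff_mul_le (by norm_num) |>.2 (by omega)⟩, S,
      mem_powersetCard_univ.2 rfl, hcut⟩
  calc erMeasure n p {ω | ¬ (graphOf ω).Connected}
      ≤ erMeasure n p (⋃ k ∈ Icc 1 (n/2), ⋃ S ∈ powersetCard k (univ : Finset (Fin n)),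
          {ω : Sym2 (Fin n) → Bool | ∀ u ∈ S, ∀ v ∈ Sᶜ, ω s(u,v) = false}) :=
        measure_mono hsub
    _ ≤ ∑ k ∈ Icc 1 (n/2), erMeasure n p (⋃ S ∈ powersetCard k (univ : Finset (Fin n)),
          {ω : Sym2 (Fin n) → Bool | ∀ u ∈ S, ∀ v ∈ Sᶜ, ω s(u,v) = false}) :=
        measure_biUnion_finset_le _ _
    _ ≤ ∑ k ∈ Icc 1 (n/2), ∑ S ∈ powersetCard k (univ : Finset (Fin n)),
          erMeasure n p {ω : Sym2 (Fin n) → Bool | ∀ u ∈ S, ∀ v ∈ Sᶜ, ω s(u,v) = false} :=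
        Finset.sum_le_sum fun k _ => measure_biUnion_finset_le _ _
    _ ≤ ∑ k ∈ Icc 1 (n/2), ∑ S ∈ powersetCard k (univ : Finset (Fin n)),
          ENNReal.ofReal (Real.exp (-(p * (k * (n - k) : ℕ)))) := by
        refine Finset.sum_le_sum fun k _ => Finset.sum_le_sum fun S hS => ?_
        have hSc : S.card = k := mem_powersetCard_univ.1 hS
        calc erMeasure n p {ω : Sym2 (Fin n) → Bool | ∀ u ∈ S, ∀ v ∈ Sᶜ, ω s(u,v) = false}
            ≤ ENNReal.ofReal (Real.exp (-p)) ^ (S.card * (n - S.card)) :=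
              er_cut_measure n p hp S
          _ = ENNReal.ofReal (Real.exp (-p) ^ (k * (n - k))) := by
              rw [hSc, ENNReal.ofReal_pow (Real.exp_nonneg _)]
          _ = ENNReal.ofReal (Real.exp (-(p * (k * (n - k) : ℕ)))) := by
              rw [← Real.exp_nat_mul]
              ring_nf
    _ = ENNReal.ofReal (erRealBound p n) := by
        rw [erRealBound, ENNReal.ofReal_sum_of_nonneg (fun k _ =>
          mul_nonneg (Nat.cast_nonneg _) (Real.exp_nonneg _))]
        refine Finset.sum_congr rfl fun k _ => ?_
        rw [Finset.sum_const, card_powersetCard, card_univ, Fintype.card_fin,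
          nsmul_eq_mul, ENNReal.ofReal_mul (Nat.cast_nonneg _), ENNReal.ofReal_natCast]

lemma er_choose_le_pow (n k : ℕ) : n.choose k ≤ n ^ k :=
  (Nat.choose_le_descFactorial n k).trans (Nat.descFactorial_le_pow n k)

lemma er_choose_le_two_pow (n k : ℕ) (h : k ≤ n) : n.choose k ≤ 2 ^ n := by
  calc n.choose k ≤ ∑ i ∈ range (n+1), n.choose i :=
        Finset.single_le_sum (fun i _ => Nat.zero_le _) (mem_range.2 (by omega))
    _ = 2 ^ n := Nat.sum_range_choose n

lemma erRealBound_le (c : ℝ) (hc : 1 < c) (n : ℕ) (h2 : 2 ≤ n)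
    (hx : Real.exp (-((c-1)/2 * Real.log n)) ≤ 1/2)
    (hE2 : Real.log 2 + 1 ≤ (c * ((c-1)/(2*c)) / 2) * Real.log n) :
    erRealBound (c * Real.log n / n) n
      ≤ 2 * Real.exp (-((c-1)/2 * Real.log n)) + n * Real.exp (-(n:ℝ)) := by
  set δ : ℝ := (c-1)/2 with hδ
  set ε : ℝ := (c-1)/(2*c) with hε
  have hc0 : (0:ℝ) < c := by linarith
  have hδ0 : 0 < δ := by rw [hδ]; linarith
  have hε0 : 0 < ε := by rw [hε]; apply div_pos <;> linarith
  have hε1 : ε < 1 := by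
    rw [hε, div_lt_one (by linarith)]; linarith
  have hn0 : (0:ℝ) < n := by positivity
  have hL : 0 < Real.log n := Real.log_pos (by exact_mod_cast h2)
  set L : ℝ := Real.log n with hLdef
  set p : ℝ := c * L / n with hpdef
  have hp0 : 0 < p := by rw [hpdef]; positivity
  set x : ℝ := Real.exp (-(δ * L)) with hxdef
  have hx0 : 0 < x := Real.exp_pos _
  have hterm_small : ∀ k ∈ Icc 1 (n/2), (k:ℝ) ≤ ε * n →
      (n.choose k : ℝ) * Real.exp (-(p * (k * (n - k) : ℕ))) ≤ x ^ k := by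
    intro k hk hkε
    rw [mem_Icc] at hk
    have hkn : k ≤ n := le_trans hk.2 (Nat.div_le_self n 2)
    have hcast : ((k * (n - k) : ℕ) : ℝ) = (k:ℝ) * ((n:ℝ) - (k:ℝ)) := by
      push_cast [Nat.cast_sub hkn]; ring
    have h1 : (n.choose k : ℝ) ≤ (n:ℝ) ^ k := by
      exact_mod_cast er_choose_le_pow n k
    have hnk : (1 - ε) * n ≤ (n:ℝ) - k := by nlinarith
    have h2exp : c * (1-ε) * (k * L) ≤ p * ((k * (n - k) : ℕ) : ℝ) := by
      rw [hcast, hpdef]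
      rw [div_mul_eq_mul_div, le_div_iff₀ hn0]
      have hk1 : (1:ℝ) ≤ k := by exact_mod_cast hk.1
      nlinarith [mul_le_mul_of_nonneg_left hnk (by positivity : (0:ℝ) ≤ c * L * k)]
    have hpow : (n:ℝ) ^ k = Real.exp (k * L) := by
      rw [Real.exp_nat_mul, hLdef, Real.exp_log hn0]
    calc (n.choose k : ℝ) * Real.exp (-(p * (k * (n - k) : ℕ)))
        ≤ (n:ℝ)^k * Real.exp (-(c * (1-ε) * (k * L))) := by
          apply mul_le_mul h1 (Real.exp_le_exp.2 (by linarith)) (Real.exp_nonneg _)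
            (by positivity)
      _ = Real.exp ((k:ℝ) * L - c * (1-ε) * (k * L)) := by
          rw [hpow, ← Real.exp_add]; ring_nf
      _ = x ^ k := by
          rw [hxdef, ← Real.exp_nat_mul]
          congr 1
          rw [hε, hδ]
          field_simp
          ring
  have hterm_large : ∀ k ∈ Icc 1 (n/2), ε * n < (k:ℝ) →
      (n.choose k : ℝ) * Real.exp (-(p * (k * (n - k) : ℕ))) ≤ Real.exp (-(n:ℝ)) := by
    intro k hk hkε
    rw [mem_Icc] at hk
    have hkn : k ≤ n := le_trans hk.2 (Nat.div_le_self n 2)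
    have hkhalf : (k:ℝ) ≤ (n:ℝ)/2 := by
      have := (Nat.le_div_iff_mul_le (by norm_num : 0 < 2)).1 hk.2
      have : (k:ℝ)*2 ≤ n := by exact_mod_cast this
      linarith
    have hcast : ((k * (n - k) : ℕ) : ℝ) = (k:ℝ) * ((n:ℝ) - (k:ℝ)) := by
      push_cast [Nat.cast_sub hkn]; ring
    have h1 : (n.choose k : ℝ) ≤ (2:ℝ) ^ n := by
      exact_mod_cast er_choose_le_two_pow n k hkn
    have h2exp : (c * ε / 2) * ((n:ℝ) * L) ≤ p * ((k * (n - k) : ℕ) : ℝ) := by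
      rw [hcast, hpdef]
      have hnk : (n:ℝ)/2 ≤ (n:ℝ) - k := by linarith
      have key : (ε*(n:ℝ))*((n:ℝ)/2) ≤ (k:ℝ)*((n:ℝ)-(k:ℝ)) :=
        mul_le_mul hkε.le hnk (by positivity) (Nat.cast_nonneg k)
      calc (c * ε / 2) * ((n:ℝ) * L) = (c*L/(n:ℝ)) * ((ε*(n:ℝ))*((n:ℝ)/2)) := by
            field_simp
        _ ≤ (c*L/(n:ℝ)) * ((k:ℝ)*((n:ℝ)-(k:ℝ))) :=
            mul_le_mul_of_nonneg_left key (by positivity)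
    have hpow2 : (2:ℝ) ^ n = Real.exp ((n:ℝ) * Real.log 2) := by
      rw [Real.exp_nat_mul, Real.exp_log (by norm_num : (0:ℝ) < 2)]
    calc (n.choose k : ℝ) * Real.exp (-(p * (k * (n - k) : ℕ)))
        ≤ (2:ℝ)^n * Real.exp (-((c * ε / 2) * ((n:ℝ) * L))) := by
          apply mul_le_mul h1 (Real.exp_le_exp.2 (by linarith)) (Real.exp_nonneg _)
            (by positivity)
      _ = Real.exp ((n:ℝ) * Real.log 2 - (c * ε / 2) * ((n:ℝ) * L)) := by
          rw [hpow2, ← Real.exp_add]; ring_nf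
      _ ≤ Real.exp (-(n:ℝ)) := by
          apply Real.exp_le_exp.2
          have h3 : (Real.log 2 + 1) * (n:ℝ) ≤ ((c * ε / 2) * L) * n := by
            apply mul_le_mul_of_nonneg_right _ hn0.le
            exact hE2
          nlinarith
  rw [erRealBound, ← Finset.sum_filter_add_sum_filter_not (Icc 1 (n/2))
    (fun k : ℕ => (k:ℝ) ≤ ε * n)]
  have hsmall : ∑ k ∈ (Icc 1 (n/2)).filter (fun k : ℕ => (k:ℝ) ≤ ε * n),
      (n.choose k : ℝ) * Real.exp (-((c * Real.log n / n) * (k * (n - k) : ℕ))) ≤ 2 * x := by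
    calc ∑ k ∈ (Icc 1 (n/2)).filter (fun k : ℕ => (k:ℝ) ≤ ε * n),
          (n.choose k : ℝ) * Real.exp (-((c * Real.log n / n) * (k * (n - k) : ℕ)))
        ≤ ∑ k ∈ (Icc 1 (n/2)).filter (fun k : ℕ => (k:ℝ) ≤ ε * n), x ^ k := by
          refine Finset.sum_le_sum fun k hk => ?_
          rw [mem_filter] at hk
          exact hterm_small k hk.1 hk.2
      _ ≤ ∑ k ∈ Icc 1 (n/2), x ^ k :=
          Finset.sum_le_sum_of_subset_of_nonneg (Finset.filter_subset _ _)
            (fun k _ _ => by positivity)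
      _ = ∑ j ∈ range (n/2), x ^ (j+1) := by
          rw [← Finset.Ico_add_one_right_eq_Icc, Finset.sum_Ico_eq_sum_range]
          simp [add_comm]
      _ = x * ∑ j ∈ range (n/2), x ^ j := by
          rw [Finset.mul_sum]
          exact Finset.sum_congr rfl fun j _ => by ring
      _ ≤ x * 2 := by
          apply mul_le_mul_of_nonneg_left _ hx0.le
          calc ∑ j ∈ range (n/2), x ^ j ≤ ∑ j ∈ range (n/2), (1/2:ℝ)^j :=
                Finset.sum_le_sum fun j _ => pow_le_pow_left₀ hx0.le hx j
            _ ≤ 2 := sum_geometric_two_le _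
      _ = 2 * x := by ring
  have hlarge : ∑ k ∈ (Icc 1 (n/2)).filter (fun k : ℕ => ¬ ((k:ℝ) ≤ ε * n)),
      (n.choose k : ℝ) * Real.exp (-((c * Real.log n / n) * (k * (n - k) : ℕ)))
        ≤ n * Real.exp (-(n:ℝ)) := by
    calc ∑ k ∈ (Icc 1 (n/2)).filter (fun k : ℕ => ¬ ((k:ℝ) ≤ ε * n)),
          (n.choose k : ℝ) * Real.exp (-((c * Real.log n / n) * (k * (n - k) : ℕ)))
        ≤ ∑ _k ∈ (Icc 1 (n/2)).filter (fun k : ℕ => ¬ ((k:ℝ) ≤ ε * n)), Real.exp (-(n:ℝ)) := by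
          refine Finset.sum_le_sum fun k hk => ?_
          rw [mem_filter] at hk
          exact hterm_large k hk.1 (lt_of_not_ge hk.2)
      _ = ((Icc 1 (n/2)).filter (fun k : ℕ => ¬ ((k:ℝ) ≤ ε * n))).card * Real.exp (-(n:ℝ)) := by
          rw [Finset.sum_const, nsmul_eq_mul]
      _ ≤ n * Real.exp (-(n:ℝ)) := by
          apply mul_le_mul_of_nonneg_right _ (Real.exp_nonneg _)
          have h1 : ((Icc 1 (n/2)).filter (fun k : ℕ => ¬ ((k:ℝ) ≤ ε * n))).card ≤ n := by
            calc _ ≤ (Icc 1 (n/2)).card := Finset.card_filter_le _ _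
              _ = n/2 := by rw [Nat.card_Icc]; omega
              _ ≤ n := Nat.div_le_self n 2
          exact_mod_cast h1
  linarith

lemma erRealBound_tendsto (c : ℝ) (hc : 1 < c) :
    Tendsto (fun n : ℕ => erRealBound (c * Real.log n / n) n) atTop (nhds 0) := by
  have hδ0 : 0 < (c-1)/2 := by linarith
  have hlog : Tendsto (fun n : ℕ => Real.log n) atTop atTop :=
    Real.tendsto_log_atTop.comp tendsto_natCast_atTop_atTop
  have hA : Tendsto (fun n : ℕ => Real.exp (-((c-1)/2 * Real.log n))) atTop (nhds 0) := by
    apply Real.tendsto_exp_atBot.comp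
    rw [tendsto_neg_atBot_iff]
    exact hlog.const_mul_atTop hδ0
  have hB : Tendsto (fun n : ℕ => (n:ℝ) * Real.exp (-(n:ℝ))) atTop (nhds 0) := by
    have := (Real.tendsto_pow_mul_exp_neg_atTop_nhds_zero 1).comp tendsto_natCast_atTop_atTop
    simpa [Function.comp_def] using this
  have hg : Tendsto (fun n : ℕ =>
      2 * Real.exp (-((c-1)/2 * Real.log n)) + (n:ℝ) * Real.exp (-(n:ℝ)))
      atTop (nhds 0) := by
    have := (hA.const_mul 2).add hB
    simpa using this
  have hE2c : 0 < c * ((c-1)/(2*c)) / 2 := by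
    apply div_pos _ (by norm_num)
    apply mul_pos (by linarith)
    apply div_pos (by linarith) (by linarith)
  have hE2ev : ∀ᶠ n : ℕ in atTop,
      Real.log 2 + 1 ≤ (c * ((c-1)/(2*c)) / 2) * Real.log n :=
    (hlog.const_mul_atTop hE2c).eventually_ge_atTop _
  have hxev : ∀ᶠ n : ℕ in atTop, Real.exp (-((c-1)/2 * Real.log n)) ≤ 1/2 :=
    (hA.eventually (eventually_le_nhds (by norm_num : (0:ℝ) < 1/2)))
  have hev : ∀ᶠ n : ℕ in atTop, erRealBound (c * Real.log n / n) n
      ≤ 2 * Real.exp (-((c-1)/2 * Real.log n)) + (n:ℝ) * Real.exp (-(n:ℝ)) := by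
    filter_upwards [eventually_ge_atTop 2, hxev, hE2ev] with n h2 hx hE2
    exact erRealBound_le c hc n h2 hx hE2
  have hnn : ∀ᶠ n : ℕ in atTop, 0 ≤ erRealBound (c * Real.log n / n) n := by
    filter_upwards with n
    exact Finset.sum_nonneg fun k _ => mul_nonneg (Nat.cast_nonneg _) (Real.exp_nonneg _)
  exact tendsto_of_tendsto_of_tendsto_of_le_of_le' tendsto_const_nhds hg hnn hev

end erdosRenyiAux

/-- Erdős–Rényi connectivity: for `p = c log n / n` with `c > 1`, the probability
that `G(n,p)` is connected tends to `1` as `n → ∞`. -/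
theorem stmt_8 (c : ℝ) (hc : 1 < c) :
    Tendsto
      (fun n : ℕ =>
        erMeasure n (c * Real.log n / n) {ω | (graphOf ω).Connected})
      atTop (nhds 1) := by
  have key : Tendsto (fun n : ℕ =>
      erMeasure n (c * Real.log n / n) {ω | ¬ (graphOf ω).Connected})
      atTop (nhds 0) := by
    have hof : Tendsto (fun n : ℕ => ENNReal.ofReal (erRealBound (c * Real.log n / n) n))
        atTop (nhds 0) := by
      have := ENNReal.tendsto_ofReal (erRealBound_tendsto c hc)
      simpa using this
    apply tendsto_of_tendsto_of_tendsto_of_le_of_le' tendsto_const_nhds hof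
    · filter_upwards with n
      exact zero_le
    · filter_upwards [eventually_ge_atTop 1] with n hn
      apply er_bad_bound n _ hn
      apply div_nonneg _ (Nat.cast_nonneg n)
      exact mul_nonneg (by linarith) (Real.log_natCast_nonneg n)
  have hlow : ∀ n : ℕ,
      1 - erMeasure n (c * Real.log n / n) {ω | ¬ (graphOf ω).Connected}
        ≤ erMeasure n (c * Real.log n / n) {ω | (graphOf ω).Connected} := by
    intro n
    rw [tsub_le_iff_right]
    calc (1:ENNReal) = erMeasure n (c * Real.log n / n) Set.univ := measure_univ.symm
      _ = erMeasure n (c * Real.log n / n)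
          ({ω | (graphOf ω).Connected} ∪ {ω | ¬ (graphOf ω).Connected}) := by
          congr 1
          ext ω
          simp [em]
      _ ≤ _ := measure_union_le _ _
  have hlowt : Tendsto (fun n : ℕ =>
      1 - erMeasure n (c * Real.log n / n) {ω | ¬ (graphOf ω).Connected})
      atTop (nhds 1) := by
    have hcont : Tendsto (fun x : ENNReal => 1 - x) (nhds 0) (nhds 1) := by
      have := (ENNReal.continuous_sub_left (by norm_num : (1:ENNReal) ≠ ⊤)).tendsto 0
      simpa using this
    exact hcont.comp key
  refine tendsto_of_tendsto_of_tendsto_of_le_of_le hlowt tendsto_const_nhds hlow fun n => ?_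
  exact prob_le_one
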